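/- Let p be a prime, let L be a field of characteristic p with algebraic closure L̄, let d ≥ 2 be an integer, and let γ ∈ L be an element that is not algebraic over the prime field 𝔽_p. Then the set of λ ∈ L̄ for which there exists a prime number q with f_λ^q(γ) = γ (with γ viewed in L̄) is infinite; in particular, γ is periodic under f_λ for infinitely many λ ∈ L̄. -/

import Mathlib

open Polynomial

section Aux

variable {F K : Type*} [Field F] [Field K] [IsAlgClosed K] [Algebra F K]

/-- the polynomial in `λ` giving `f_λ^[n] g`. -/
noncomputable def iterPoly (d : ℕ) (g : K) : ℕ → Polynomial K
  | 0 => C g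
  | n + 1 => (iterPoly d g n) ^ d + X

lemma iterPoly_eval (d : ℕ) (g lam : K) (n : ℕ) :
    (iterPoly d g n).eval lam = (fun x => x ^ d + lam)^[n] g := by
  induction n with
  | zero => simp [iterPoly]
  | succ n ih => simp [iterPoly, Function.iterate_succ_apply', ih]

lemma iterPoly_eval_zero (d : ℕ) (g : K) (n : ℕ) :
    (iterPoly d g n).eval 0 = g ^ d ^ n := by
  induction n with
  | zero => simp [iterPoly]
  | succ n ih => simp [iterPoly, ih, pow_succ, pow_mul]

lemma iterPoly_monic_natDegree {d : ℕ} (hd : 2 ≤ d) (g : K) (n : ℕ) (hn : 1 ≤ n) :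
    (iterPoly d g n).Monic ∧ (iterPoly d g n).natDegree = d ^ (n - 1) := by
  induction n with
  | zero => omega
  | succ n ih =>
    rcases Nat.eq_or_lt_of_le hn with h | h
    · have : n = 0 := by omega
      subst this
      have h1 : iterPoly d g 1 = X + C (g ^ d) := by
        show (C g) ^ d + X = _
        rw [← C_pow]; ring
      rw [h1]
      exact ⟨monic_X_add_C _, natDegree_X_add_C _⟩
    · have hn1 : 1 ≤ n := by omega
      obtain ⟨hmon, hdeg⟩ := ih hn1
      have hmonp : ((iterPoly d g n) ^ d).Monic := hmon.pow d
      have hdegp : ((iterPoly d g n) ^ d).natDegree = d ^ n := by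
        rw [hmon.natDegree_pow, hdeg, ← pow_succ']
        congr 1
        omega
      have h2 : 2 ≤ d ^ n := le_trans hd (Nat.le_self_pow (by omega) d)
      have hX : (X : Polynomial K).degree < ((iterPoly d g n) ^ d).degree := by
        rw [degree_X, degree_eq_natDegree hmonp.ne_zero, hdegp]
        exact_mod_cast Nat.lt_of_lt_of_le one_lt_two h2
      constructor
      · exact hmonp.add_of_left hX
      · show ((iterPoly d g n) ^ d + X).natDegree = d ^ n
        rw [natDegree_add_eq_left_of_degree_lt hX, hdegp]
    
lemma exists_good_root {d : ℕ} (hd : 2 ≤ d) (g : K) (htr : Transcendental F g)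
    {q : ℕ} (hq : q.Prime) :
    ∃ lam : K, lam ≠ g - g ^ d ∧ (fun x : K => x ^ d + lam)^[q] g = g := by
  by_contra hcon
  push_neg at hcon
  set Q : Polynomial K := iterPoly d g q - C g with hQ
  have hq2 : 2 ≤ q := hq.two_le
  have hq1 : 1 ≤ q := by omega
  obtain ⟨hmon, hdeg⟩ := iterPoly_monic_natDegree hd g q hq1
  set N : ℕ := d ^ (q - 1) with hN
  have hN2 : 2 ≤ N := le_trans hd (Nat.le_self_pow (by omega) d)
  have hClt : (-C g).degree < (iterPoly d g q).degree := by
    rw [degree_eq_natDegree hmon.ne_zero, hdeg, degree_neg]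
    calc (C g).degree ≤ 0 := degree_C_le
    _ < (N : WithBot ℕ) := by exact_mod_cast Nat.lt_of_lt_of_le two_pos hN2
  have hQmon : Q.Monic := by
    rw [hQ, sub_eq_add_neg]
    exact hmon.add_of_left hClt
  have hQdeg : Q.natDegree = N := by
    rw [hQ, sub_eq_add_neg, natDegree_add_eq_left_of_degree_lt hClt, hdeg]
  set lam0 : K := g - g ^ d with hlam0
  -- every root of Q equals lam0
  have hroots : ∀ r ∈ Q.roots, r = lam0 := by
    intro r hr
    have h0 : Q.eval r = 0 := by
      exact (mem_roots (hQmon.ne_zero)).mp hr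
    have hit : (fun x : K => x ^ d + r)^[q] g = g := by
      have : (iterPoly d g q).eval r = g := by
        have : (iterPoly d g q).eval r - g = 0 := by
          simpa [hQ] using h0
        exact sub_eq_zero.mp this
      rw [← iterPoly_eval]; exact this
    by_contra hne
    exact hcon r hne hit
  have hsplit : Q.Splits := IsAlgClosed.splits Q
  have hcard : Q.roots.card = N := by
    rw [splits_iff_card_roots.mp hsplit, hQdeg]
  have hQeq : Q = (X - C lam0) ^ N := by
    have hrep : Q.roots = Multiset.replicate N lam0 :=
      Multiset.eq_replicate.mpr ⟨hcard, hroots⟩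
    conv_lhs => rw [hsplit.eq_prod_roots_of_monic hQmon]
    rw [hrep, Multiset.map_replicate, Multiset.prod_replicate]
  -- evaluate at 0
  have hkey : g ^ d ^ q - g = (g ^ d - g) ^ N := by
    have h1 : Q.eval 0 = g ^ d ^ q - g := by
      simp [hQ, iterPoly_eval_zero]
    have h2 : Q.eval 0 = (g ^ d - g) ^ N := by
      rw [hQeq]
      simp [hlam0]
    rw [← h1, h2]
  -- transcendence contradiction
  set S : Polynomial F := (X ^ d - X) ^ N - (X ^ d ^ q - X) with hS
  have haev : Polynomial.aeval g S = 0 := by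
    simp only [hS, map_sub, map_pow, map_add, Polynomial.aeval_X]
    rw [← hkey]
    ring
  have hSz : S = 0 := by
    have hinj := transcendental_iff_injective.mp htr
    have : Polynomial.aeval g S = Polynomial.aeval g (0 : Polynomial F) := by simpa using haev
    exact hinj this
  have hc1 : S.coeff 1 = 1 := by
    have hdvd : (X : Polynomial F) ^ 2 ∣ (X ^ d - X) ^ N := by
      have h1 : (X : Polynomial F) ∣ X ^ d - X := by
        refine ⟨X ^ (d - 1) - 1, ?_⟩
        rw [mul_sub, mul_one, ← pow_succ']
        congr 2
        omega
      calc (X : Polynomial F) ^ 2 ∣ X ^ N := pow_dvd_pow X hN2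
      _ ∣ (X ^ d - X) ^ N := pow_dvd_pow_of_dvd h1 N
    obtain ⟨T, hT⟩ := hdvd
    have hco : ((X ^ d - X : Polynomial F) ^ N).coeff 1 = 0 := by
      rw [hT, mul_comm, coeff_mul_X_pow']
      norm_num
    have hdq : d ^ q ≠ 1 := by
      have : 2 ≤ d ^ q := le_trans hd (Nat.le_self_pow (by omega) d)
      omega
    rw [hS]
    simp [coeff_sub, hco, coeff_X_pow, Ne.symm hdq, coeff_X_one]
  rw [hSz] at hc1
  simp at hc1

end Aux

/-- If `γ ∈ L` (char `p`) is not algebraic over `𝔽_p`, then there are infinitely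
many parameters `λ` in the algebraic closure of `L` for which `f_λ^q(γ) = γ` for some prime
`q`; in particular, `γ` is periodic under `f_λ` for infinitely many `λ`. -/
theorem infinitely_many_prime_periodic_parameters
    (p : ℕ) [Fact p.Prime] (L : Type*) [Field L] [CharP L p] [Algebra (ZMod p) L]
    (γ : L) (d : ℕ) (hd : 2 ≤ d) (hγ : ¬ IsAlgebraic (ZMod p) γ) :
    {lam : AlgebraicClosure L |
        ∃ q : ℕ, q.Prime ∧
          (fun x : AlgebraicClosure L => x ^ d + lam)^[q] (algebraMap L (AlgebraicClosure L) γ)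
            = algebraMap L (AlgebraicClosure L) γ}.Infinite ∧
    {lam : AlgebraicClosure L |
        ∃ n : ℕ, 0 < n ∧
          (fun x : AlgebraicClosure L => x ^ d + lam)^[n] (algebraMap L (AlgebraicClosure L) γ)
            = algebraMap L (AlgebraicClosure L) γ}.Infinite := by
  set K := AlgebraicClosure L with hK
  set g : K := algebraMap L K γ with hg
  have htr : Transcendental (ZMod p) g := by
    intro h
    exact hγ ((isAlgebraic_algebraMap_iff (algebraMap L K).injective).mp h)
  have hroot : ∀ q : Nat.Primes,
      ∃ lam : K, lam ≠ g - g ^ d ∧ (fun x : K => x ^ d + lam)^[(q : ℕ)] g = g :=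
    fun q => exists_good_root hd g htr q.2
  choose f hf1 hf2 using hroot
  have hinj : Function.Injective f := by
    intro q q' h
    by_contra hne
    have hne' : (q : ℕ) ≠ (q' : ℕ) := fun h' => hne (Subtype.coe_injective h')
    have h1 : Function.IsPeriodicPt (fun x : K => x ^ d + f q) q g := hf2 q
    have h2 : Function.IsPeriodicPt (fun x : K => x ^ d + f q) q' g := by
      rw [h]; exact hf2 q'
    have hgcd := h1.gcd h2
    rw [(Nat.coprime_primes q.2 q'.2).mpr hne'] at hgcd
    have : g ^ d + f q = g := by
      have := hgcd
      rwa [Function.IsPeriodicPt, Function.IsFixedPt, Function.iterate_one] at this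
    exact hf1 q (by linear_combination this)
  have hmem : ∀ q : Nat.Primes, f q ∈ {lam : K |
      ∃ q' : ℕ, q'.Prime ∧ (fun x : K => x ^ d + lam)^[q'] g = g} :=
    fun q => ⟨q, q.2, hf2 q⟩
  have hinf1 := Set.infinite_of_injective_forall_mem hinj hmem
  refine ⟨hinf1, hinf1.mono ?_⟩
  rintro lam ⟨q, hq, hit⟩
  exact ⟨q, hq.pos, hit⟩
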